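/- In the setting of the hyperbolic semigroup splitting, if F: H → H is globally bounded and globally Lipschitz with constant L satisfying L(μ_{m+1}^{−1} − μ_m^{−1}) < 1, then the map M: B(Ω,H) → B(Ω,H) on the Banach space of bounded maps Z: Ω → H with supremum norm, defined by M(Z)(ω) := ∫_{−∞}^0 T_{−s} p⁺ F(Z(θ(s,ω)) + Y₁(θ(s,ω))) ds − ∫_0^∞ T_{−s} p⁻ F(Z(θ(s,ω)) + Y₁(θ(s,ω))) ds (for a fixed map Y₁: Ω → H), is a strict contraction with contraction constant μ := L(μ_{m+1}^{−1} − μ_m^{−1}) < 1, and hence has a unique fixed point Z₀ ∈ B(Ω,H). -/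

import Mathlib

open MeasureTheory

lemma core_exp_Ioi {b : ℝ} (hb : 0 < b) :
    IntegrableOn (fun s : ℝ => Real.exp (-(b * s))) (Set.Ioi 0) ∧
    ∫ s in Set.Ioi (0:ℝ), Real.exp (-(b * s)) = b⁻¹ := by
  constructor
  · simpa [neg_mul] using exp_neg_integrableOn_Ioi 0 hb
  · have h := integral_comp_mul_left_Ioi (fun y : ℝ => Real.exp (-y)) 0 (b := b) hb
    simp only [mul_zero] at h
    rw [h, integral_exp_neg_Ioi_zero, smul_eq_mul, mul_one]

lemma exp_Ici {a : ℝ} (ha : a < 0) :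
    IntegrableOn (fun s : ℝ => Real.exp (s * a)) (Set.Ici 0) ∧
    ∫ s in Set.Ici (0:ℝ), Real.exp (s * a) = -a⁻¹ := by
  have h := core_exp_Ioi (b := -a) (by linarith)
  have he : (fun s : ℝ => Real.exp (-(-a * s))) = fun s : ℝ => Real.exp (s * a) := by
    funext s; ring_nf
  rw [he] at h
  constructor
  · exact (integrableOn_Ici_iff_integrableOn_Ioi).mpr h.1
  · rw [integral_Ici_eq_integral_Ioi, h.2, inv_neg]

lemma exp_Iic {b : ℝ} (hb : 0 < b) :
    IntegrableOn (fun s : ℝ => Real.exp (s * b)) (Set.Iic 0) ∧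
    ∫ s in Set.Iic (0:ℝ), Real.exp (s * b) = b⁻¹ := by
  have A : MeasurableEmbedding fun x : ℝ => -x :=
    (Homeomorph.neg ℝ).isClosedEmbedding.measurableEmbedding
  have h := exp_Ici (a := -b) (by linarith)
  constructor
  · have := (A.integrableOn_map_iff
      (f := fun s : ℝ => Real.exp (s * b)) (s := Set.Iic 0) (μ := volume))
    rw [Measure.map_neg_eq_self] at this
    rw [this]
    have hpre : (fun x : ℝ => -x) ⁻¹' Set.Iic 0 = Set.Ici 0 := by
      ext x; simp
    rw [hpre]
    have : ((fun s : ℝ => Real.exp (s * b)) ∘ fun x : ℝ => -x)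
        = fun s : ℝ => Real.exp (s * -b) := by funext s; simp [Function.comp]
    rw [this]; exact h.1
  · have h2 := integral_comp_neg_Ioi (0:ℝ) (fun s : ℝ => Real.exp (s * b))
    simp only [neg_zero] at h2
    rw [← h2]
    have : (fun s : ℝ => Real.exp (-s * b)) = fun s : ℝ => Real.exp (s * -b) := by
      funext s; ring_nf
    calc ∫ x in Set.Ioi (0:ℝ), Real.exp (-x * b)
        = ∫ x in Set.Ioi (0:ℝ), Real.exp (x * -b) := by
          apply setIntegral_congr_fun measurableSet_Ioi
          intro x _; ring_nf
      _ = b⁻¹ := by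
          rw [← integral_Ici_eq_integral_Ioi, h.2, inv_neg, neg_neg]

/-- With `L(μ_{m+1}⁻¹ − μ_m⁻¹) < 1`, the map `M` on the Banach
space of bounded maps `Ω → H` is a strict contraction with constant
`μ = L(μ_{m+1}⁻¹ − μ_m⁻¹)` and hence has a unique fixed point.  Here `Tp s`
stands for `T_{-s}p⁺` and `Tm s` for `T_{-s}p⁻`. -/
theorem hyperbolic_integral_operator_contraction
    {Ω : Type*} {H : Type*} [NormedAddCommGroup H] [InnerProductSpace ℝ H]
    [CompleteSpace H]
    (θ : ℝ → Ω → Ω) (Tp Tm : ℝ → H →L[ℝ] H) (μm μm1 : ℝ)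
    (hμm : μm < 0) (hμm1 : 0 < μm1)
    (hTp : ∀ s : ℝ, s ≤ 0 → ‖Tp s‖ ≤ Real.exp (s * μm1))
    (hTm : ∀ s : ℝ, 0 ≤ s → ‖Tm s‖ ≤ Real.exp (s * μm))
    (F : H → H) (L : ℝ) (hL : 0 ≤ L)
    (hLip : ∀ v₁ v₂, ‖F v₁ - F v₂‖ ≤ L * ‖v₁ - v₂‖)
    (hFbd : ∃ C, ∀ v, ‖F v‖ ≤ C)
    (hcontr : L * (μm1⁻¹ - μm⁻¹) < 1)
    (Y₁ : Ω → H)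
    (M : (Ω → H) → Ω → H)
    (hM : ∀ Z : Ω → H, ∀ ω, M Z ω =
      (∫ s in Set.Iic (0:ℝ), Tp s (F (Z (θ s ω) + Y₁ (θ s ω))))
        - ∫ s in Set.Ici (0:ℝ), Tm s (F (Z (θ s ω) + Y₁ (θ s ω))))
    (hint : ∀ Z : Ω → H, (∃ c, ∀ ω, ‖Z ω‖ ≤ c) → ∀ ω,
      IntegrableOn (fun s => Tp s (F (Z (θ s ω) + Y₁ (θ s ω)))) (Set.Iic (0:ℝ)) ∧
      IntegrableOn (fun s => Tm s (F (Z (θ s ω) + Y₁ (θ s ω)))) (Set.Ici (0:ℝ))) :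
    (∀ Z : Ω → H, (∃ c, ∀ ω, ‖Z ω‖ ≤ c) → ∃ c', ∀ ω, ‖M Z ω‖ ≤ c') ∧
    (∀ Z₁ Z₂ : Ω → H, (∃ c, ∀ ω, ‖Z₁ ω‖ ≤ c) → (∃ c, ∀ ω, ‖Z₂ ω‖ ≤ c) →
      ∀ K : ℝ, (∀ ω, ‖Z₁ ω - Z₂ ω‖ ≤ K) →
        ∀ ω, ‖M Z₁ ω - M Z₂ ω‖ ≤ L * (μm1⁻¹ - μm⁻¹) * K) ∧
    (∃! Z₀ : {Z : Ω → H // ∃ c, ∀ ω, ‖Z ω‖ ≤ c}, M Z₀.1 = Z₀.1) := by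
  classical
  obtain ⟨C₀, hC₀⟩ := hFbd
  set C : ℝ := max C₀ 0 with hCdef
  have hC : ∀ v, ‖F v‖ ≤ C := fun v => le_trans (hC₀ v) (le_max_left _ _)
  have hCpos : 0 ≤ C := le_max_right _ _
  have hIicI := (exp_Iic hμm1).1
  have hIicV := (exp_Iic hμm1).2
  have hIciI := (exp_Ici hμm).1
  have hIciV := (exp_Ici hμm).2
  have hinvm : μm⁻¹ < 0 := inv_lt_zero.mpr hμm
  have hinv1 : 0 < μm1⁻¹ := inv_pos.mpr hμm1
  have hdiff : 0 < μm1⁻¹ - μm⁻¹ := by linarith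
  -- generic estimates
  have estp : ∀ (G : ℝ → H) (D : ℝ), 0 ≤ D → IntegrableOn G (Set.Iic 0) →
      (∀ s ≤ (0:ℝ), ‖G s‖ ≤ Real.exp (s * μm1) * D) →
      ‖∫ s in Set.Iic (0:ℝ), G s‖ ≤ μm1⁻¹ * D := by
    intro G D hD hGI hGb
    calc ‖∫ s in Set.Iic (0:ℝ), G s‖ ≤ ∫ s in Set.Iic (0:ℝ), ‖G s‖ :=
        norm_integral_le_integral_norm _
      _ ≤ ∫ s in Set.Iic (0:ℝ), Real.exp (s * μm1) * D := by
          apply setIntegral_mono_on hGI.norm (hIicI.mul_const D) measurableSet_Iic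
          intro s hs; exact hGb s hs
      _ = μm1⁻¹ * D := by rw [integral_mul_const, hIicV]
  have estm : ∀ (G : ℝ → H) (D : ℝ), 0 ≤ D → IntegrableOn G (Set.Ici 0) →
      (∀ s, (0:ℝ) ≤ s → ‖G s‖ ≤ Real.exp (s * μm) * D) →
      ‖∫ s in Set.Ici (0:ℝ), G s‖ ≤ -μm⁻¹ * D := by
    intro G D hD hGI hGb
    calc ‖∫ s in Set.Ici (0:ℝ), G s‖ ≤ ∫ s in Set.Ici (0:ℝ), ‖G s‖ :=
        norm_integral_le_integral_norm _
      _ ≤ ∫ s in Set.Ici (0:ℝ), Real.exp (s * μm) * D := by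
          apply setIntegral_mono_on hGI.norm (hIciI.mul_const D) measurableSet_Ici
          intro s hs; exact hGb s hs
      _ = -μm⁻¹ * D := by rw [integral_mul_const, hIciV]
  -- part 1
  have part1 : ∀ Z : Ω → H, (∃ c, ∀ ω, ‖Z ω‖ ≤ c) → ∀ ω,
      ‖M Z ω‖ ≤ C * (μm1⁻¹ - μm⁻¹) := by
    intro Z hZ ω
    obtain ⟨hIp, hIm⟩ := hint Z hZ ω
    rw [hM]
    have b1 : ‖∫ s in Set.Iic (0:ℝ), Tp s (F (Z (θ s ω) + Y₁ (θ s ω)))‖ ≤ μm1⁻¹ * C := by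
      apply estp _ C hCpos hIp
      intro s hs
      calc ‖Tp s (F (Z (θ s ω) + Y₁ (θ s ω)))‖ ≤ ‖Tp s‖ * ‖F (Z (θ s ω) + Y₁ (θ s ω))‖ :=
          (Tp s).le_opNorm _
        _ ≤ Real.exp (s * μm1) * C :=
          mul_le_mul (hTp s hs) (hC _) (norm_nonneg _) (Real.exp_pos _).le
    have b2 : ‖∫ s in Set.Ici (0:ℝ), Tm s (F (Z (θ s ω) + Y₁ (θ s ω)))‖ ≤ -μm⁻¹ * C := by
      apply estm _ C hCpos hIm
      intro s hs
      calc ‖Tm s (F (Z (θ s ω) + Y₁ (θ s ω)))‖ ≤ ‖Tm s‖ * ‖F (Z (θ s ω) + Y₁ (θ s ω))‖ :=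
          (Tm s).le_opNorm _
        _ ≤ Real.exp (s * μm) * C :=
          mul_le_mul (hTm s hs) (hC _) (norm_nonneg _) (Real.exp_pos _).le
    calc ‖(∫ s in Set.Iic (0:ℝ), Tp s (F (Z (θ s ω) + Y₁ (θ s ω))))
          - ∫ s in Set.Ici (0:ℝ), Tm s (F (Z (θ s ω) + Y₁ (θ s ω)))‖
        ≤ ‖∫ s in Set.Iic (0:ℝ), Tp s (F (Z (θ s ω) + Y₁ (θ s ω)))‖
          + ‖∫ s in Set.Ici (0:ℝ), Tm s (F (Z (θ s ω) + Y₁ (θ s ω)))‖ := norm_sub_le _ _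
      _ ≤ μm1⁻¹ * C + -μm⁻¹ * C := add_le_add b1 b2
      _ = C * (μm1⁻¹ - μm⁻¹) := by ring
  -- part 2
  have part2 : ∀ Z₁ Z₂ : Ω → H, (∃ c, ∀ ω, ‖Z₁ ω‖ ≤ c) → (∃ c, ∀ ω, ‖Z₂ ω‖ ≤ c) →
      ∀ K : ℝ, (∀ ω, ‖Z₁ ω - Z₂ ω‖ ≤ K) →
        ∀ ω, ‖M Z₁ ω - M Z₂ ω‖ ≤ L * (μm1⁻¹ - μm⁻¹) * K := by
    intro Z₁ Z₂ h1 h2 K hK ω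
    have hK0 : 0 ≤ K := le_trans (norm_nonneg _) (hK ω)
    obtain ⟨hIp1, hIm1⟩ := hint Z₁ h1 ω
    obtain ⟨hIp2, hIm2⟩ := hint Z₂ h2 ω
    rw [hM, hM, sub_sub_sub_comm, ← integral_sub hIp1 hIp2, ← integral_sub hIm1 hIm2]
    have key : ∀ s : ℝ, ‖F (Z₁ (θ s ω) + Y₁ (θ s ω)) - F (Z₂ (θ s ω) + Y₁ (θ s ω))‖ ≤ L * K := by
      intro s
      refine le_trans (hLip _ _) ?_
      rw [add_sub_add_right_eq_sub]
      exact mul_le_mul_of_nonneg_left (hK (θ s ω)) hL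
    have b1 : ‖∫ s in Set.Iic (0:ℝ),
          (Tp s (F (Z₁ (θ s ω) + Y₁ (θ s ω))) - Tp s (F (Z₂ (θ s ω) + Y₁ (θ s ω))))‖
        ≤ μm1⁻¹ * (L * K) := by
      apply estp _ (L * K) (mul_nonneg hL hK0) (hIp1.sub hIp2)
      intro s hs
      simp only [Pi.sub_apply]
      rw [← map_sub (Tp s)]
      calc ‖Tp s (F (Z₁ (θ s ω) + Y₁ (θ s ω)) - F (Z₂ (θ s ω) + Y₁ (θ s ω)))‖
          ≤ ‖Tp s‖ * ‖F (Z₁ (θ s ω) + Y₁ (θ s ω)) - F (Z₂ (θ s ω) + Y₁ (θ s ω))‖ :=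
          (Tp s).le_opNorm _
        _ ≤ Real.exp (s * μm1) * (L * K) :=
          mul_le_mul (hTp s hs) (key s) (norm_nonneg _) (Real.exp_pos _).le
    have b2 : ‖∫ s in Set.Ici (0:ℝ),
          (Tm s (F (Z₁ (θ s ω) + Y₁ (θ s ω))) - Tm s (F (Z₂ (θ s ω) + Y₁ (θ s ω))))‖
        ≤ -μm⁻¹ * (L * K) := by
      apply estm _ (L * K) (mul_nonneg hL hK0) (hIm1.sub hIm2)
      intro s hs
      simp only [Pi.sub_apply]
      rw [← map_sub (Tm s)]
      calc ‖Tm s (F (Z₁ (θ s ω) + Y₁ (θ s ω)) - F (Z₂ (θ s ω) + Y₁ (θ s ω)))‖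
          ≤ ‖Tm s‖ * ‖F (Z₁ (θ s ω) + Y₁ (θ s ω)) - F (Z₂ (θ s ω) + Y₁ (θ s ω))‖ :=
          (Tm s).le_opNorm _
        _ ≤ Real.exp (s * μm) * (L * K) :=
          mul_le_mul (hTm s hs) (key s) (norm_nonneg _) (Real.exp_pos _).le
    calc ‖(∫ s in Set.Iic (0:ℝ),
            (Tp s (F (Z₁ (θ s ω) + Y₁ (θ s ω))) - Tp s (F (Z₂ (θ s ω) + Y₁ (θ s ω)))))
          - ∫ s in Set.Ici (0:ℝ),
            (Tm s (F (Z₁ (θ s ω) + Y₁ (θ s ω))) - Tm s (F (Z₂ (θ s ω) + Y₁ (θ s ω))))‖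
        ≤ ‖∫ s in Set.Iic (0:ℝ),
            (Tp s (F (Z₁ (θ s ω) + Y₁ (θ s ω))) - Tp s (F (Z₂ (θ s ω) + Y₁ (θ s ω))))‖
          + ‖∫ s in Set.Ici (0:ℝ),
            (Tm s (F (Z₁ (θ s ω) + Y₁ (θ s ω))) - Tm s (F (Z₂ (θ s ω) + Y₁ (θ s ω))))‖ :=
          norm_sub_le _ _
      _ ≤ μm1⁻¹ * (L * K) + -μm⁻¹ * (L * K) := add_le_add b1 b2
      _ = L * (μm1⁻¹ - μm⁻¹) * K := by ring
  refine ⟨fun Z hZ => ⟨C * (μm1⁻¹ - μm⁻¹), part1 Z hZ⟩, part2, ?_⟩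
  -- part 3: fixed point via Banach on bounded "continuous" (discrete topology) functions
  letI : TopologicalSpace Ω := ⊥
  haveI : DiscreteTopology Ω := ⟨rfl⟩
  haveI : Nonempty (BoundedContinuousFunction Ω H) := ⟨0⟩
  have hbd : ∀ f : BoundedContinuousFunction Ω H, ∃ c, ∀ ω, ‖f ω‖ ≤ c :=
    fun f => ⟨‖f‖, fun ω => f.norm_coe_le_norm ω⟩
  set κ : NNReal := ⟨L * (μm1⁻¹ - μm⁻¹), mul_nonneg hL hdiff.le⟩ with hκ
  set Φ : BoundedContinuousFunction Ω H → BoundedContinuousFunction Ω H := fun f =>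
    BoundedContinuousFunction.ofNormedAddCommGroupDiscrete (M ⇑f) (C * (μm1⁻¹ - μm⁻¹))
      (part1 ⇑f (hbd f)) with hΦ
  have hΦcoe : ∀ f, ⇑(Φ f) = M ⇑f := fun f => rfl
  have hcontracting : ContractingWith κ Φ := by
    refine ⟨?_, ?_⟩
    · exact_mod_cast hcontr
    · apply LipschitzWith.of_dist_le_mul
      intro f g
      rw [BoundedContinuousFunction.dist_le (mul_nonneg κ.coe_nonneg dist_nonneg)]
      intro ω
      rw [hΦcoe, hΦcoe, dist_eq_norm]
      exact part2 ⇑f ⇑g (hbd f) (hbd g) (dist f g)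
        (fun ω' => by rw [← dist_eq_norm]; exact BoundedContinuousFunction.dist_coe_le_dist ω') ω
  set Z := ContractingWith.fixedPoint Φ hcontracting with hZdef
  have hfix : Φ Z = Z := hcontracting.fixedPoint_isFixedPt
  have hMZ : M ⇑Z = ⇑Z := by
    calc M ⇑Z = ⇑(Φ Z) := (hΦcoe Z).symm
      _ = ⇑Z := by rw [hfix]
  refine ⟨⟨⇑Z, ‖Z‖, fun ω => Z.norm_coe_le_norm ω⟩, hMZ, ?_⟩
  rintro ⟨W, c, hc⟩ hW
  set g := BoundedContinuousFunction.ofNormedAddCommGroupDiscrete W c hc with hg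
  have hgfix : Function.IsFixedPt Φ g := by
    show Φ g = g
    ext ω
    show M ⇑g ω = g ω
    exact congrFun hW ω
  have hgZ : g = Z := hcontracting.fixedPoint_unique hgfix
  apply Subtype.ext
  show W = ⇑Z
  calc W = ⇑g := rfl
    _ = ⇑Z := by rw [hgZ]
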